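/- Let H be an n×n Hermitian matrix and V an n×n unitary matrix such that the work operator W = H − V†HV commutes with H. Then for every real s, e^{iHs/2} e^{−i V†HV s} e^{iHs/2} = e^{iWs}. Consequently, for any density matrix ρ diagonal in the eigenbasis of H, Tr[e^{iHs/2} e^{−iV†HVs} e^{iHs/2} ρ] = Tr[e^{iWs} ρ], i.e., the characteristic function of the work quasi-distribution equals the characteristic function of the work-operator distribution for an incoherent work operator. -/

import Mathlib

open Matrix NormedSpace
open scoped ComplexOrder

/-- If the work operator `W = H - V†HV` commutes with `H`, then
`e^{iHs/2} e^{-iV†HVs} e^{iHs/2} = e^{iWs}` for every real `s`, and consequently for any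
density matrix `ρ` diagonal in the eigenbasis of `H` (i.e. commuting with `H`),
the characteristic function of the work quasi-distribution equals `Tr[e^{iWs} ρ]`. -/
theorem stmt_1 (n : ℕ) (H V ρ : Matrix (Fin n) (Fin n) ℂ)
    (hH : H.IsHermitian) (hV : V ∈ Matrix.unitaryGroup (Fin n) ℂ)
    (hcomm : Commute (H - Vᴴ * H * V) H)
    (hρ : ρ.PosSemidef) (hρtr : ρ.trace = 1) (hρH : Commute ρ H) :
    ∀ s : ℝ,
      (NormedSpace.exp ((Complex.I * s / 2) • H) *
          NormedSpace.exp ((-(Complex.I * s)) • (Vᴴ * H * V)) *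
          NormedSpace.exp ((Complex.I * s / 2) • H)
        = NormedSpace.exp ((Complex.I * s) • (H - Vᴴ * H * V)))
      ∧ (NormedSpace.exp ((Complex.I * s / 2) • H) *
          NormedSpace.exp ((-(Complex.I * s)) • (Vᴴ * H * V)) *
          NormedSpace.exp ((Complex.I * s / 2) • H) * ρ).trace
        = (NormedSpace.exp ((Complex.I * s) • (H - Vᴴ * H * V)) * ρ).trace := by
  intro s
  have hHX : Commute H (Vᴴ * H * V) := by
    have h1 : Commute (H - (H - Vᴴ * H * V)) H := (Commute.refl H).sub_left hcomm
    simpa [sub_sub_cancel] using h1.symm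
  have hA : Commute ((Complex.I * s / 2) • H)
      ((-(Complex.I * s)) • (Vᴴ * H * V) + (Complex.I * s / 2) • H) :=
    (((hHX.smul_left _).smul_right _).add_right
      (((Commute.refl H).smul_left _).smul_right _))
  have hB : Commute ((-(Complex.I * s)) • (Vᴴ * H * V)) ((Complex.I * s / 2) • H) :=
    (hHX.symm.smul_left _).smul_right _
  have key : NormedSpace.exp ((Complex.I * s / 2) • H) *
      NormedSpace.exp ((-(Complex.I * s)) • (Vᴴ * H * V)) *
      NormedSpace.exp ((Complex.I * s / 2) • H)
      = NormedSpace.exp ((Complex.I * s) • (H - Vᴴ * H * V)) := by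
    have e1 : (Complex.I * s) • (H - Vᴴ * H * V)
        = (Complex.I * s / 2) • H +
          ((-(Complex.I * s)) • (Vᴴ * H * V) + (Complex.I * s / 2) • H) := by
      module
    rw [e1, Matrix.exp_add_of_commute _ _ hA, Matrix.exp_add_of_commute _ _ hB, mul_assoc]
  exact ⟨key, by rw [key]⟩
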